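/- arXiv:math/0510253 — 2 statements merged into one kernel-verified Lean document; each statement's English description precedes it below -/
import Mathlib

section
/- Let H be a Hopf algebra over k with antipode S, and B ⊆ A a cleft right H-extension with cleaving map j and convolution inverse j̃. Then j̃ satisfies ρ(j̃(h)) = Σ j̃(h₂) ⊗ S(h₁) for all h ∈ H, where ρ is the comodule coaction of A. -/
open TensorProduct

/-- A right `H`-comodule algebra structure on a `k`-algebra `A`: a coassociative counital
coaction `ρ : A → A ⊗ H` which is a morphism of algebras. -/
structure ComodAlg (k H A : Type*) [CommRing k] [Ring H] [Bialgebra k H]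
    [Ring A] [Algebra k A] where
  ρ : A →ₗ[k] A ⊗[k] H
  coassoc : ∀ a : A,
    TensorProduct.assoc k A H H (TensorProduct.map ρ LinearMap.id (ρ a)) =
      TensorProduct.map LinearMap.id Coalgebra.comul (ρ a)
  counit : ∀ a : A,
    TensorProduct.rid k A (TensorProduct.map LinearMap.id Coalgebra.counit (ρ a)) = a
  map_one : ρ 1 = 1
  map_mul : ∀ a b : A, ρ (a * b) = ρ a * ρ b

namespace ComodAlg

variable {k H A : Type*} [CommRing k] [Ring H] [Bialgebra k H] [Ring A] [Algebra k A]

/-- The subalgebra of coinvariants `B = {a : ρ(a) = a ⊗ 1}` of a comodule algebra. -/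
def coinv (c : ComodAlg k H A) : Subalgebra k A where
  carrier := {a : A | c.ρ a = a ⊗ₜ[k] (1 : H)}
  mul_mem' := by
    intro a b ha hb
    simp only [Set.mem_setOf_eq] at *
    rw [c.map_mul, ha, hb, Algebra.TensorProduct.tmul_mul_tmul, mul_one]
  one_mem' := by
    simp only [Set.mem_setOf_eq, c.map_one, Algebra.TensorProduct.one_def]
  add_mem' := by
    intro a b ha hb
    simp only [Set.mem_setOf_eq] at *
    rw [map_add, ha, hb, TensorProduct.add_tmul]
  algebraMap_mem' := by
    intro r
    simp only [Set.mem_setOf_eq, Algebra.algebraMap_eq_smul_one, map_smul, c.map_one,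
      Algebra.TensorProduct.one_def, TensorProduct.smul_tmul']

end ComodAlg

/-- The convolution product on `Hom_k(H, A)`. -/
noncomputable def conv {k H A : Type*} [CommRing k] [AddCommGroup H] [Module k H]
    [Coalgebra k H] [Ring A] [Algebra k A] (f g : H →ₗ[k] A) : H →ₗ[k] A :=
  LinearMap.mul' k A ∘ₗ TensorProduct.map f g ∘ₗ Coalgebra.comul

/-- The unit `η ∘ ε` of the convolution algebra. -/
noncomputable def convOne (k H A : Type*) [CommRing k] [AddCommGroup H] [Module k H]
    [Coalgebra k H] [Ring A] [Algebra k A] : H →ₗ[k] A :=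
  Algebra.linearMap k A ∘ₗ Coalgebra.counit

section ConvLemmas

open Coalgebra

variable {k H L L' : Type*} [CommRing k] [AddCommGroup H] [Module k H] [Coalgebra k H]
  [Ring L] [Algebra k L] [Ring L'] [Algebra k L']

lemma conv_apply' (f g : H →ₗ[k] L) (x : H) {ι : Type*} (repr : Coalgebra.Repr k x ι) :
    conv f g x = ∑ i ∈ repr.index, f (repr.left i) * g (repr.right i) := by
  simp only [conv, LinearMap.comp_apply, ← repr.eq, map_sum, TensorProduct.map_tmul,
    LinearMap.mul'_apply]

lemma conv_assoc (f g h : H →ₗ[k] L) : conv (conv f g) h = conv f (conv g h) := by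
  ext x
  have key := Coalgebra.sum_map_tmul_tmul_eq f g h x (repr := ℛ k x)
    (a₁ := fun i => ℛ k _) (a₂ := fun i => ℛ k _)
  have key2 := congrArg (⇑(LinearMap.mul' k L ∘ₗ LinearMap.lTensor L (LinearMap.mul' k L))) key
  simp only [map_sum, LinearMap.comp_apply, LinearMap.lTensor_tmul, LinearMap.mul'_apply] at key2
  rw [conv_apply' (conv f g) h x (ℛ k x), conv_apply' f (conv g h) x (ℛ k x)]
  have lhs_eq : ∀ i ∈ (ℛ k x).index, conv f g ((ℛ k x).left i) * h ((ℛ k x).right i)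
      = ∑ j ∈ (ℛ k ((ℛ k x).left i)).index,
          f ((ℛ k ((ℛ k x).left i)).left j) * (g ((ℛ k ((ℛ k x).left i)).right j)
            * h ((ℛ k x).right i)) := by
    intro i _
    rw [conv_apply' f g _ (ℛ k _), Finset.sum_mul]
    simp [mul_assoc]
  have rhs_eq : ∀ i ∈ (ℛ k x).index, f ((ℛ k x).left i) * conv g h ((ℛ k x).right i)
      = ∑ j ∈ (ℛ k ((ℛ k x).right i)).index,
          f ((ℛ k x).left i) * (g ((ℛ k ((ℛ k x).right i)).left j)
            * h ((ℛ k ((ℛ k x).right i)).right j)) := by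
    intro i _
    rw [conv_apply' g h _ (ℛ k _), Finset.mul_sum]
  rw [Finset.sum_congr rfl lhs_eq, Finset.sum_congr rfl rhs_eq]
  exact key2.symm

lemma one_conv (f : H →ₗ[k] L) : conv (convOne k H L) f = f := by
  ext x
  rw [conv_apply' _ _ x (ℛ k x)]
  have key := congrArg (⇑(TensorProduct.lid k L))
    (Coalgebra.sum_counit_tmul_map_eq f x (repr := ℛ k x))
  simp only [map_sum, TensorProduct.lid_tmul, one_smul] at key
  simpa [convOne, Algebra.smul_def] using key

lemma conv_one (f : H →ₗ[k] L) : conv f (convOne k H L) = f := by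
  ext x
  rw [conv_apply' _ _ x (ℛ k x)]
  have key := congrArg (⇑(TensorProduct.rid k L))
    (Coalgebra.sum_map_tmul_counit_eq f x (repr := ℛ k x))
  simp only [map_sum, TensorProduct.rid_tmul, one_smul] at key
  simpa [convOne, Algebra.smul_def, Algebra.commutes] using key

lemma conv_comp (φ : L →ₗ[k] L') (hφ : ∀ a b : L, φ (a * b) = φ a * φ b)
    (f g : H →ₗ[k] L) : conv (φ ∘ₗ f) (φ ∘ₗ g) = φ ∘ₗ conv f g := by
  ext x
  rw [LinearMap.comp_apply, conv_apply' _ _ x (ℛ k x), conv_apply' _ _ x (ℛ k x), map_sum]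
  simp [hφ]

lemma convOne_comp (φ : L →ₗ[k] L') (hφ : φ 1 = 1) :
    φ ∘ₗ convOne k H L = convOne k H L' := by
  ext x
  simp [convOne, Algebra.algebraMap_eq_smul_one, map_smul, hφ]

end ConvLemmas

lemma conv_antipode_id {k H : Type*} [CommRing k] [Ring H] [HopfAlgebra k H] :
    conv (HopfAlgebra.antipode (R := k)) (LinearMap.id : H →ₗ[k] H) = convOne k H H := by
  rw [conv, convOne, ← HopfAlgebra.mul_antipode_rTensor_comul]
  rfl

/-- For a cleft extension with cleaving map `j` and convolution inverse `j̃`, the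
coaction of `j̃(h)` is `∑ j̃(h₂) ⊗ S(h₁)`. -/
theorem cleft_inverse_coaction
    {k H A : Type*} [CommRing k] [Ring H] [HopfAlgebra k H] [Ring A] [Algebra k A]
    (c : ComodAlg k H A) (j jt : H →ₗ[k] A)
    (hcolin : ∀ h : H, c.ρ (j h) =
      TensorProduct.map j LinearMap.id (Coalgebra.comul (R := k) h))
    (hj1 : conv j jt = convOne k H A) (hj2 : conv jt j = convOne k H A) :
    ∀ h : H, c.ρ (jt h) =
      TensorProduct.map jt (HopfAlgebra.antipode (R := k))
        (TensorProduct.comm k H H (Coalgebra.comul (R := k) h)) := by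
  classical
  open Coalgebra in
  let ι₁ : A →ₗ[k] A ⊗[k] H :=
    (Algebra.TensorProduct.includeLeft (R := k) (S := k) (A := A) (B := H)).toLinearMap
  let ι₂ : H →ₗ[k] A ⊗[k] H :=
    (Algebra.TensorProduct.includeRight (R := k) (A := A) (B := H)).toLinearMap
  have hι₁mul : ∀ a b : A, ι₁ (a * b) = ι₁ a * ι₁ b := fun a b => by simp [ι₁]
  have hι₂mul : ∀ a b : H, ι₂ (a * b) = ι₂ a * ι₂ b := fun a b => by simp [ι₂]
  let J : H →ₗ[k] A ⊗[k] H := ι₁ ∘ₗ j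
  let Jt : H →ₗ[k] A ⊗[k] H := ι₁ ∘ₗ jt
  let W : H →ₗ[k] A ⊗[k] H := ι₂
  let WS : H →ₗ[k] A ⊗[k] H := ι₂ ∘ₗ HopfAlgebra.antipode (R := k)
  have hP : c.ρ ∘ₗ j = conv J W := by
    ext x
    rw [LinearMap.comp_apply, hcolin, conv_apply' _ _ x (ℛ k x), ← (ℛ k x).eq]
    simp [J, W, ι₁, ι₂, map_sum, Algebra.TensorProduct.tmul_mul_tmul]
  have hG : (TensorProduct.map jt (HopfAlgebra.antipode (R := k)) ∘ₗ
      (TensorProduct.comm k H H).toLinearMap ∘ₗ Coalgebra.comul) = conv WS Jt := by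
    ext x
    rw [LinearMap.comp_apply, LinearMap.comp_apply, conv_apply' _ _ x (ℛ k x), ← (ℛ k x).eq]
    simp [WS, Jt, ι₁, ι₂, map_sum, Algebra.TensorProduct.tmul_mul_tmul]
  have hJtJ : conv Jt J = convOne k H (A ⊗[k] H) := by
    show conv (ι₁ ∘ₗ jt) (ι₁ ∘ₗ j) = _
    rw [conv_comp ι₁ hι₁mul, hj2, convOne_comp ι₁ (by simp [ι₁, Algebra.TensorProduct.one_def])]
  have hWSW : conv WS W = convOne k H (A ⊗[k] H) := by
    have hW : W = ι₂ ∘ₗ LinearMap.id := rfl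
    rw [hW]
    show conv (ι₂ ∘ₗ HopfAlgebra.antipode (R := k)) _ = _
    rw [conv_comp ι₂ hι₂mul, conv_antipode_id, convOne_comp ι₂ (by simp [ι₂, Algebra.TensorProduct.one_def])]
  have hPQ : conv (c.ρ ∘ₗ j) (c.ρ ∘ₗ jt) = convOne k H (A ⊗[k] H) := by
    rw [conv_comp c.ρ c.map_mul, hj1, convOne_comp c.ρ c.map_one]
  have hGP : conv (conv WS Jt) (c.ρ ∘ₗ j) = convOne k H (A ⊗[k] H) := by
    rw [hP, conv_assoc, ← conv_assoc Jt J W, hJtJ, one_conv, hWSW]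
  have main : c.ρ ∘ₗ jt = conv WS Jt := by
    calc c.ρ ∘ₗ jt = conv (convOne k H (A ⊗[k] H)) (c.ρ ∘ₗ jt) := (one_conv _).symm
    _ = conv (conv (conv WS Jt) (c.ρ ∘ₗ j)) (c.ρ ∘ₗ jt) := by rw [hGP]
    _ = conv (conv WS Jt) (conv (c.ρ ∘ₗ j) (c.ρ ∘ₗ jt)) := conv_assoc _ _ _
    _ = conv WS Jt := by rw [hPQ, conv_one]
  intro h
  have := congrArg (fun φ : H →ₗ[k] A ⊗[k] H => φ h) (main.trans hG.symm)
  simpa using this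
end

section
/- Let H be a Hopf algebra over k, B ⊆ A a right H-extension, T a subalgebra of B, and ϑ : H → A a left total T-integral, i.e. a k-linear map with ϑ(1) = 1, with image contained in the commutant A^T = {a : ta = at for all t ∈ T}, and colinear in the sense that ρ(ϑ(h)) = Σ ϑ(h₂) ⊗ S(h₁). Then the map φ : A → A, φ(a) = Σ a⁰ ϑ(a¹), takes values in B, restricts to the identity on B, and is a B-T bimodule map; hence the inclusion B ⊆ A splits as a map of B-T bimodules. -/
open TensorProduct

section Aux
variable {k H A : Type*} [CommRing k] [Ring H] [HopfAlgebra k H] [Ring A] [Algebra k A]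

/-- auxiliary: `Φ (a ⊗ (x ⊗ y)) = (a ⊗ x) * ρ(ϑ y)` -/
noncomputable def myPhi (c : ComodAlg k H A) (ϑ : H →ₗ[k] A) :
    A ⊗[k] (H ⊗[k] H) →ₗ[k] A ⊗[k] H :=
  LinearMap.mul' k (A ⊗[k] H) ∘ₗ (c.ρ ∘ₗ ϑ).lTensor (A ⊗[k] H) ∘ₗ
    (TensorProduct.assoc k A H H).symm.toLinearMap

lemma myPhi_tmul (c : ComodAlg k H A) (ϑ : H →ₗ[k] A) (a : A) (x y : H) :
    myPhi c ϑ (a ⊗ₜ[k] (x ⊗ₜ[k] y)) = (a ⊗ₜ[k] x) * c.ρ (ϑ y) := by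
  simp [myPhi]

lemma myPhi_assoc (c : ComodAlg k H A) (ϑ : H →ₗ[k] A) (x : A ⊗[k] H) (h : H) :
    myPhi c ϑ (TensorProduct.assoc k A H H (x ⊗ₜ[k] h)) = x * c.ρ (ϑ h) := by
  induction x using TensorProduct.induction_on with
  | zero => rw [zero_tmul, LinearEquiv.map_zero, map_zero, zero_mul]
  | tmul a y => simp [myPhi]
  | add u v hu hv => rw [add_tmul, LinearEquiv.map_add, map_add, hu, hv, add_mul]
end Aux

section Key
variable {k H A : Type*} [CommRing k] [Ring H] [HopfAlgebra k H] [Ring A] [Algebra k A]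

open Coalgebra in
lemma counit_smul_sum {h : H} {ι : Type*} (r : Coalgebra.Repr k h ι) :
    ∑ i ∈ r.index, Coalgebra.counit (R := k) (r.left i) • r.right i = h := by
  have := Coalgebra.sum_counit_tmul_eq r
  apply_fun (TensorProduct.lid k H) at this
  simp only [map_sum, TensorProduct.lid_tmul] at this
  simpa using this

open Coalgebra in
lemma myPhi_comul (c : ComodAlg k H A) (ϑ : H →ₗ[k] A)
    (hcolin : ∀ h : H, c.ρ (ϑ h) =
      TensorProduct.map ϑ (HopfAlgebra.antipode (R := k))
        (TensorProduct.comm k H H (Coalgebra.comul (R := k) h)))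
    (a : A) (h : H) :
    myPhi c ϑ (a ⊗ₜ[k] Coalgebra.comul (R := k) h) = (a * ϑ h) ⊗ₜ[k] (1 : H) := by
  classical
  set r := ℛ k h with hr
  set a₁ : ∀ i : r.ι, Coalgebra.Repr k (r.left i) (H × H) := fun i => ℛ k (r.left i) with ha₁
  set a₂ : ∀ i : r.ι, Coalgebra.Repr k (r.right i) (H × H) := fun i => ℛ k (r.right i) with ha₂
  -- the trilinear gadget
  set f₁ : H →ₗ[k] A := (LinearMap.mulLeft k a).comp ϑ with hf₁
  set f₂ : H ⊗[k] H →ₗ[k] H :=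
    LinearMap.mul' k H ∘ₗ (HopfAlgebra.antipode (R := k)).lTensor H with hf₂
  set G : H ⊗[k] (H ⊗[k] H) →ₗ[k] A ⊗[k] H :=
    TensorProduct.map f₁ f₂ ∘ₗ (TensorProduct.comm k (H ⊗[k] H) H).toLinearMap ∘ₗ
      (TensorProduct.assoc k H H H).symm.toLinearMap with hG
  have hGtmul : ∀ x y z : H, G (x ⊗ₜ[k] (y ⊗ₜ[k] z)) = (a * ϑ z) ⊗ₜ[k] (x * HopfAlgebra.antipode (R := k) y) := by
    intro x y z
    simp [hG, hf₁, hf₂]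
  -- LHS computation
  have lhs_eq : myPhi c ϑ (a ⊗ₜ[k] Coalgebra.comul (R := k) h) =
      ∑ i ∈ r.index, ∑ j ∈ (a₂ i).index,
        (a * ϑ ((a₂ i).right j)) ⊗ₜ[k]
          (r.left i * HopfAlgebra.antipode (R := k) ((a₂ i).left j)) := by
    rw [← r.eq, TensorProduct.tmul_sum, map_sum]
    refine Finset.sum_congr rfl fun i _ => ?_
    rw [myPhi_tmul, hcolin, ← (a₂ i).eq, map_sum, map_sum, Finset.mul_sum]
    refine Finset.sum_congr rfl fun j _ => ?_
    simp [Algebra.TensorProduct.tmul_mul_tmul]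
  -- apply G to coassociativity
  have coas := Coalgebra.sum_tmul_tmul_eq r a₁ a₂
  have coasG := congrArg G coas
  simp only [map_sum, hGtmul] at coasG
  rw [lhs_eq, ← coasG]
  -- now evaluate the other side using the antipode and counit laws
  calc ∑ i ∈ r.index, ∑ j ∈ (a₁ i).index,
        (a * ϑ (r.right i)) ⊗ₜ[k]
          ((a₁ i).left j * HopfAlgebra.antipode (R := k) ((a₁ i).right j))
      = ∑ i ∈ r.index, (a * ϑ (r.right i)) ⊗ₜ[k]
          (Coalgebra.counit (R := k) (r.left i) • (1 : H)) := by
        refine Finset.sum_congr rfl fun i _ => ?_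
        rw [← TensorProduct.tmul_sum, HopfAlgebra.sum_mul_antipode_eq_smul (a₁ i)]
    _ = (a * ϑ (∑ i ∈ r.index, Coalgebra.counit (R := k) (r.left i) • r.right i)) ⊗ₜ[k] (1 : H) := by
        rw [map_sum, Finset.mul_sum, TensorProduct.sum_tmul]
        refine Finset.sum_congr rfl fun i _ => ?_
        rw [map_smul, mul_smul_comm, TensorProduct.tmul_smul, TensorProduct.smul_tmul']
    _ = (a * ϑ h) ⊗ₜ[k] (1 : H) := by rw [counit_smul_sum r]
end Key

lemma mem_coinv_iff {k H A : Type*} [CommRing k] [Ring H] [Bialgebra k H] [Ring A]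
    [Algebra k A] (c : ComodAlg k H A) (a : A) :
    a ∈ c.coinv ↔ c.ρ a = a ⊗ₜ[k] (1 : H) := Iff.rfl

set_option synthInstance.maxHeartbeats 400000 in
/-- A left total `T`-integral `ϑ` for a right `H`-extension `B ⊆ A` induces a
`B`-`T` bimodule retraction `a ↦ ∑ a⁰ ϑ(a¹)` of the inclusion `B ⊆ A`. -/
theorem total_integral_gives_bimodule_splitting
    {k H A : Type*} [CommRing k] [Ring H] [HopfAlgebra k H] [Ring A] [Algebra k A]
    (c : ComodAlg k H A) (T : Subalgebra k A) (hT : T ≤ c.coinv)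
    (ϑ : H →ₗ[k] A)
    -- `ϑ` is a left total `T`-integral
    (hϑ1 : ϑ 1 = 1)
    (hϑT : ∀ (h : H), ∀ t ∈ T, t * ϑ h = ϑ h * t)
    (hϑcolin : ∀ h : H, c.ρ (ϑ h) =
      TensorProduct.map ϑ (HopfAlgebra.antipode (R := k))
        (TensorProduct.comm k H H (Coalgebra.comul (R := k) h))) :
    -- `φ(a) = ∑ a⁰ ϑ(a¹)` takes values in `B`
    (∀ a : A, LinearMap.mul' k A (TensorProduct.map LinearMap.id ϑ (c.ρ a)) ∈ c.coinv) ∧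
    -- `φ` restricts to the identity on `B`
    (∀ b ∈ c.coinv,
      LinearMap.mul' k A (TensorProduct.map LinearMap.id ϑ (c.ρ b)) = b) ∧
    -- `φ` is left `B`-linear
    (∀ b ∈ c.coinv, ∀ a : A,
      LinearMap.mul' k A (TensorProduct.map LinearMap.id ϑ (c.ρ (b * a))) =
        b * LinearMap.mul' k A (TensorProduct.map LinearMap.id ϑ (c.ρ a))) ∧
    -- `φ` is right `T`-linear
    (∀ t ∈ T, ∀ a : A,
      LinearMap.mul' k A (TensorProduct.map LinearMap.id ϑ (c.ρ (a * t))) =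
        LinearMap.mul' k A (TensorProduct.map LinearMap.id ϑ (c.ρ a)) * t) := by
  refine ⟨?_, ?_, ?_, ?_⟩
  · -- values in B
    intro a
    rw [mem_coinv_iff]
    obtain ⟨s, hs⟩ := TensorProduct.exists_finset (R := k) (c.ρ a)
    have hφ : LinearMap.mul' k A (TensorProduct.map LinearMap.id ϑ (c.ρ a)) =
        ∑ p ∈ s, p.1 * ϑ p.2 := by
      rw [hs, map_sum, map_sum]
      simp
    have coas := c.coassoc a
    rw [hs, map_sum, map_sum, map_sum] at coas
    have coasΦ := congrArg (myPhi c ϑ) coas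
    simp only [map_sum, TensorProduct.map_tmul, LinearMap.id_coe, id_eq] at coasΦ
    -- LHS of coasΦ : ∑ myPhi (assoc (ρ p.1 ⊗ p.2)), RHS : ∑ myPhi (p.1 ⊗ comul p.2)
    have lhs : ∑ p ∈ s, myPhi c ϑ (TensorProduct.assoc k A H H (c.ρ p.1 ⊗ₜ[k] p.2)) =
        c.ρ (LinearMap.mul' k A (TensorProduct.map LinearMap.id ϑ (c.ρ a))) := by
      rw [hφ, map_sum]
      refine Finset.sum_congr rfl fun p _ => ?_
      rw [myPhi_assoc, c.map_mul]
    have rhs : ∑ p ∈ s, myPhi c ϑ (p.1 ⊗ₜ[k] Coalgebra.comul (R := k) p.2) =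
        (LinearMap.mul' k A (TensorProduct.map LinearMap.id ϑ (c.ρ a))) ⊗ₜ[k] (1 : H) := by
      rw [hφ, TensorProduct.sum_tmul]
      exact Finset.sum_congr rfl fun p _ => myPhi_comul c ϑ hϑcolin p.1 p.2
    rw [← lhs, coasΦ, rhs]
  · -- identity on B
    intro b hb
    rw [mem_coinv_iff] at hb
    rw [hb]
    simp [hϑ1]
  · -- left B-linearity
    intro b hb a
    rw [mem_coinv_iff] at hb
    rw [c.map_mul, hb]
    induction c.ρ a using TensorProduct.induction_on with
    | zero => simp
    | tmul a' h => simp [Algebra.TensorProduct.tmul_mul_tmul, mul_assoc]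
    | add u v hu hv => rw [mul_add, map_add, map_add, map_add, map_add, hu, hv, mul_add]
  · -- right T-linearity
    intro t ht a
    have hb := hT ht
    rw [mem_coinv_iff] at hb
    rw [c.map_mul, hb]
    induction c.ρ a using TensorProduct.induction_on with
    | zero => simp
    | tmul a' h =>
        simp only [Algebra.TensorProduct.tmul_mul_tmul, mul_one, TensorProduct.map_tmul,
          LinearMap.id_coe, id_eq, LinearMap.mul'_apply]
        rw [mul_assoc, hϑT h t ht, ← mul_assoc]
    | add u v hu hv => rw [add_mul, map_add, map_add, map_add, map_add, hu, hv, add_mul]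
end
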